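/- arXiv:1512.04880 — 3 statements merged into one kernel-verified Lean document; each statement's English description precedes it below -/
import Mathlib

section
/- Conversely, for q ≠ 1 and q ≠ 0, if H : ℝⁿ × ℝⁿ → ℝ is a C² function such that the Jacobian of the deformed Hamiltonian vector field X^q_H = (q⁻¹ ∂H/∂y, −∂H/∂x) is infinitesimally symplectic at every point, then all mixed partial derivatives ∂²H/∂yᵢ∂xⱼ vanish identically; hence (on ℝ²ⁿ) H is simple, i.e., H(x,y) = H'(x) + H''(y) for some C² functions H', H''. -/
noncomputable def pdx {n : ℕ} (H : (Fin n → ℝ) × (Fin n → ℝ) → ℝ)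
    (p : (Fin n → ℝ) × (Fin n → ℝ)) (i : Fin n) : ℝ :=
  fderiv ℝ H p (Pi.single i 1, 0)

noncomputable def pdy {n : ℕ} (H : (Fin n → ℝ) × (Fin n → ℝ) → ℝ)
    (p : (Fin n → ℝ) × (Fin n → ℝ)) (i : Fin n) : ℝ :=
  fderiv ℝ H p (0, Pi.single i 1)

/-- Standard symplectic form on `ℝⁿ × ℝⁿ`. -/
def sympl {n : ℕ} (Z₁ Z₂ : (Fin n → ℝ) × (Fin n → ℝ)) : ℝ :=
  ∑ i, (Z₁.2 i * Z₂.1 i - Z₁.1 i * Z₂.2 i)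

/-- The deformed Hamiltonian vector field `X^q_H`. -/
noncomputable def Xq {n : ℕ} (q : ℝ) (H : (Fin n → ℝ) × (Fin n → ℝ) → ℝ)
    (p : (Fin n → ℝ) × (Fin n → ℝ)) : (Fin n → ℝ) × (Fin n → ℝ) :=
  (fun i => q⁻¹ * pdy H p i, fun i => -(pdx H p i))

/-- Mixed second partial `∂²H/∂yᵢ∂xⱼ` (first in `xⱼ`, then in `yᵢ`). -/
noncomputable def pdyx {n : ℕ} (H : (Fin n → ℝ) × (Fin n → ℝ) → ℝ)
    (p : (Fin n → ℝ) × (Fin n → ℝ)) (i j : Fin n) : ℝ :=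
  fderiv ℝ (fun p' => pdx H p' j) p (0, Pi.single i 1)

section Aux

variable {n : ℕ} {H : (Fin n → ℝ) × (Fin n → ℝ) → ℝ}

/-- The linear map sending a covector `L` to the deformed Hamiltonian vector. -/
noncomputable def TXq (n : ℕ) (q : ℝ) :
    (((Fin n → ℝ) × (Fin n → ℝ)) →L[ℝ] ℝ) →L[ℝ] ((Fin n → ℝ) × (Fin n → ℝ)) :=
  (ContinuousLinearMap.pi fun i =>
      q⁻¹ • ContinuousLinearMap.apply ℝ ℝ ((0 : Fin n → ℝ), Pi.single i 1)).prod
    (ContinuousLinearMap.pi fun i =>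
      -(ContinuousLinearMap.apply ℝ ℝ ((Pi.single i (1:ℝ)), (0 : Fin n → ℝ))))

lemma TXq_apply (q : ℝ) (L : ((Fin n → ℝ) × (Fin n → ℝ)) →L[ℝ] ℝ) :
    TXq n q L = (fun i => q⁻¹ * L (0, Pi.single i 1), fun i => -(L (Pi.single i 1, 0))) := by
  rfl

lemma Xq_eq (q : ℝ) : Xq q H = fun p => TXq n q (fderiv ℝ H p) := by
  funext p
  simp [Xq, TXq_apply, pdx, pdy]

lemma fderiv_H_diff (hH : ContDiff ℝ 2 H) : Differentiable ℝ (fderiv ℝ H) :=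
  (hH.fderiv_right (m := 1) (by norm_num)).differentiable (by norm_num)

lemma fderiv_Xq (hH : ContDiff ℝ 2 H) (q : ℝ) (z Y : (Fin n → ℝ) × (Fin n → ℝ)) :
    fderiv ℝ (Xq q H) z Y = TXq n q (fderiv ℝ (fderiv ℝ H) z Y) := by
  rw [Xq_eq (H := H) q]
  rw [show (fun p => TXq n q (fderiv ℝ H p)) = (TXq n q) ∘ (fderiv ℝ H) from rfl]
  rw [fderiv_comp z (TXq n q).differentiableAt (fderiv_H_diff hH z), (TXq n q).fderiv]
  rfl

lemma snd_deriv_apply (hH : ContDiff ℝ 2 H) (z v w : (Fin n → ℝ) × (Fin n → ℝ)) :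
    fderiv ℝ (fun p => fderiv ℝ H p v) z w = fderiv ℝ (fderiv ℝ H) z w v := by
  have h := fderiv_clm_apply (c := fderiv ℝ H) (u := fun _ => v)
    (fderiv_H_diff hH z) (differentiableAt_const v)
  rw [h]
  simp

lemma snd_deriv_symm (hH : ContDiff ℝ 2 H) (z v w : (Fin n → ℝ) × (Fin n → ℝ)) :
    fderiv ℝ (fderiv ℝ H) z v w = fderiv ℝ (fderiv ℝ H) z w v :=
  second_derivative_symmetric
    (fun y => ((hH.differentiable (by norm_num)) y).hasFDerivAt)
    ((fderiv_H_diff hH z).hasFDerivAt) v w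

end Aux

theorem stmt12 {n : ℕ} (q : ℝ) (hq0 : q ≠ 0) (hq1 : q ≠ 1)
    (H : (Fin n → ℝ) × (Fin n → ℝ) → ℝ) (hH : ContDiff ℝ 2 H)
    (hsymp : ∀ z Y₁ Y₂ : (Fin n → ℝ) × (Fin n → ℝ),
      sympl (fderiv ℝ (Xq q H) z Y₁) Y₂ + sympl Y₁ (fderiv ℝ (Xq q H) z Y₂) = 0) :
    (∀ p : (Fin n → ℝ) × (Fin n → ℝ), ∀ i j, pdyx H p i j = 0) ∧
    ∃ H' H'' : (Fin n → ℝ) → ℝ, ContDiff ℝ 2 H' ∧ ContDiff ℝ 2 H'' ∧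
      ∀ x y : Fin n → ℝ, H (x, y) = H' x + H'' y := by
  set f'' := fderiv ℝ (fderiv ℝ H) with hf''
  -- Step 1: mixed second partials vanish on basis vectors.
  have key : ∀ z : (Fin n → ℝ) × (Fin n → ℝ), ∀ i j,
      f'' z (0, Pi.single i 1) (Pi.single j 1, 0) = 0 := by
    intro z i j
    have h := hsymp z (0, Pi.single i 1) (Pi.single j 1, 0)
    rw [fderiv_Xq hH, fderiv_Xq hH, TXq_apply, TXq_apply] at h
    have e1 : sympl ((fun k => q⁻¹ * (f'' z (0, Pi.single i 1)) (0, Pi.single k 1),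
        fun k => -((f'' z (0, Pi.single i 1)) (Pi.single k 1, 0))))
        ((Pi.single j 1, 0) : (Fin n → ℝ) × (Fin n → ℝ))
        = -(f'' z (0, Pi.single i 1) (Pi.single j 1, 0)) := by
      simp [sympl, Pi.single_apply, mul_comm, Finset.sum_ite_eq']
    have e2 : sympl (((0 : Fin n → ℝ), Pi.single i 1))
        ((fun k => q⁻¹ * (f'' z (Pi.single j 1, 0)) (0, Pi.single k 1),
         fun k => -((f'' z (Pi.single j 1, 0)) (Pi.single k 1, 0))))
        = q⁻¹ * f'' z (Pi.single j 1, 0) (0, Pi.single i 1) := by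
      simp [sympl, Pi.single_apply, Finset.sum_ite_eq]
    rw [e1, e2] at h
    rw [show f'' z (Pi.single j 1, 0) (0, Pi.single i 1)
        = f'' z (0, Pi.single i 1) (Pi.single j 1, 0) from snd_deriv_symm hH z _ _] at h
    have hq : q⁻¹ - 1 ≠ 0 := by
      intro hc
      apply hq1
      have : q⁻¹ = 1 := by linarith
      field_simp at this
      linarith
    have h2 : (q⁻¹ - 1) * f'' z (0, Pi.single i 1) (Pi.single j 1, 0) = 0 := by
      linear_combination h
    exact (mul_eq_zero.mp h2).resolve_left hq
  -- bilinearity: mixed second partial vanishes on all (0,w),(v,0)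
  have keyall : ∀ z : (Fin n → ℝ) × (Fin n → ℝ), ∀ w v : Fin n → ℝ,
      f'' z (0, w) (v, 0) = 0 := by
    intro z w v
    have hsum : ∀ u : Fin n → ℝ, ∑ i, u i • (Pi.single i 1 : Fin n → ℝ) = u := by
      intro u
      have : ∀ i : Fin n, u i • (Pi.single i 1 : Fin n → ℝ) = Pi.single i (u i) := by
        intro i
        rw [← Pi.single_smul, smul_eq_mul, mul_one]
      simp_rw [this]
      exact Finset.univ_sum_single u
    have hw : (((0 : Fin n → ℝ), w) : (Fin n → ℝ) × (Fin n → ℝ))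
        = ∑ i, w i • ((0 : Fin n → ℝ), (Pi.single i 1 : Fin n → ℝ)) := by
      rw [Prod.ext_iff]
      constructor
      · rw [Prod.fst_sum]
        simp
      · rw [Prod.snd_sum]
        simp only [Prod.smul_snd]
        exact (hsum w).symm
    have hv : ((v, (0 : Fin n → ℝ)) : (Fin n → ℝ) × (Fin n → ℝ))
        = ∑ j, v j • ((Pi.single j 1 : Fin n → ℝ), (0 : Fin n → ℝ)) := by
      rw [Prod.ext_iff]
      constructor
      · rw [Prod.fst_sum]
        simp only [Prod.smul_fst]
        exact (hsum v).symm
      · rw [Prod.snd_sum]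
        simp
    rw [hw, hv, map_sum]
    simp only [map_smul, ContinuousLinearMap.coe_sum', Finset.sum_apply,
      ContinuousLinearMap.coe_smul', Pi.smul_apply, map_sum, map_smul]
    simp [key z, smul_eq_mul]
  -- Part 1
  have part1 : ∀ p : (Fin n → ℝ) × (Fin n → ℝ), ∀ i j, pdyx H p i j = 0 := by
    intro p i j
    have : pdyx H p i j = f'' p (0, Pi.single i 1) (Pi.single j 1, 0) := by
      unfold pdyx pdx
      exact snd_deriv_apply hH p _ _
    rw [this, key]
  refine ⟨part1, ?_⟩
  -- Step 2: H splits.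
  -- inclusions
  have hinl : ∀ y : Fin n → ℝ, ContDiff ℝ 2 (fun x : Fin n → ℝ => H (x, y)) := by
    intro y
    exact hH.comp ((contDiff_prodMk_left y).of_le le_top)
  have hinr : ∀ x : Fin n → ℝ, ContDiff ℝ 2 (fun y : Fin n → ℝ => H (x, y)) := by
    intro x
    exact hH.comp ((contDiff_prodMk_right x).of_le le_top)
  -- the x-gradient is independent of y
  have gradx_const : ∀ x y v, fderiv ℝ H (x, y) (v, 0) = fderiv ℝ H (x, 0) (v, 0) := by
    intro x y v
    have hdiff : Differentiable ℝ (fun y' : Fin n → ℝ => fderiv ℝ H (x, y') (v, 0)) := by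
      intro y'
      have h1 : DifferentiableAt ℝ (fun p => fderiv ℝ H p (v, 0)) (x, y') :=
        ((fderiv_H_diff hH (x, y')).clm_apply (differentiableAt_const _))
      exact h1.comp y' (DifferentiableAt.prodMk (differentiableAt_const x) (differentiableAt_id : DifferentiableAt ℝ (fun y : Fin n → ℝ => y) y'))
    apply is_const_of_fderiv_eq_zero hdiff
    intro y'
    ext w
    have hcomp : (fun y'' : Fin n → ℝ => fderiv ℝ H (x, y'') (v, 0)) =
        (fun p => fderiv ℝ H p (v, 0)) ∘ (fun y'' => (x, y'')) := rfl
    rw [hcomp, fderiv_comp y'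
      ((fderiv_H_diff hH (x, y')).clm_apply (differentiableAt_const _))
      ((DifferentiableAt.prodMk (differentiableAt_const x) (differentiableAt_id : DifferentiableAt ℝ (fun y : Fin n → ℝ => y) y')))]
    have hpair : fderiv ℝ (fun y'' : Fin n → ℝ => ((x, y'') : (Fin n → ℝ) × (Fin n → ℝ))) y' =
        ContinuousLinearMap.inr ℝ (Fin n → ℝ) (Fin n → ℝ) := by
      have : (fun y'' : Fin n → ℝ => ((x, y'') : (Fin n → ℝ) × (Fin n → ℝ))) =
          fun y'' => (ContinuousLinearMap.inr ℝ (Fin n → ℝ) (Fin n → ℝ)) y'' + (x, 0) := by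
        funext y''; simp
      rw [this, fderiv_add_const]
      exact ((ContinuousLinearMap.inr ℝ (Fin n → ℝ) (Fin n → ℝ)).hasFDerivAt).fderiv
    rw [hpair]
    simp only [ContinuousLinearMap.coe_comp', Function.comp_apply,
      ContinuousLinearMap.inr_apply, ContinuousLinearMap.zero_apply]
    rw [snd_deriv_apply hH]
    exact keyall (x, y') w v
  -- hence x ↦ H(x,y) - H(x,0) is constant
  have split : ∀ x y, H (x, y) = (H (x, 0) - H 0) + H (0, y) := by
    intro x y
    have hdiff : Differentiable ℝ (fun x' : Fin n → ℝ => H (x', y) - H (x', 0)) :=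
      ((hinl y).differentiable (by norm_num)).sub ((hinl 0).differentiable (by norm_num))
    have hconst : (fun x' : Fin n → ℝ => H (x', y) - H (x', 0)) x =
        (fun x' : Fin n → ℝ => H (x', y) - H (x', 0)) 0 := by
      apply is_const_of_fderiv_eq_zero hdiff
      intro x'
      have hfder : ∀ y' : Fin n → ℝ, fderiv ℝ (fun x'' : Fin n → ℝ => H (x'', y')) x' =
          (fderiv ℝ H (x', y')).comp (ContinuousLinearMap.inl ℝ (Fin n → ℝ) (Fin n → ℝ)) := by
        intro y'
        have hcomp : (fun x'' : Fin n → ℝ => H (x'', y')) =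
            H ∘ (fun x'' => ((x'', y') : (Fin n → ℝ) × (Fin n → ℝ))) := rfl
        rw [hcomp, fderiv_comp x' (hH.differentiable (by norm_num) _)
          ((DifferentiableAt.prodMk (f₁ := fun y : Fin n → ℝ => y) differentiableAt_id (differentiableAt_const y')))]
        congr 1
        have : (fun x'' : Fin n → ℝ => ((x'', y') : (Fin n → ℝ) × (Fin n → ℝ))) =
            fun x'' => (ContinuousLinearMap.inl ℝ (Fin n → ℝ) (Fin n → ℝ)) x'' + (0, y') := by
          funext x''; simp
        rw [this, fderiv_add_const]
        exact ((ContinuousLinearMap.inl ℝ (Fin n → ℝ) (Fin n → ℝ)).hasFDerivAt).fderiv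
      rw [fderiv_fun_sub (((hinl y).differentiable (by norm_num)) x')
        (((hinl 0).differentiable (by norm_num)) x')]
      ext v
      simp only [ContinuousLinearMap.coe_sub', Pi.sub_apply, ContinuousLinearMap.zero_apply,
        hfder, ContinuousLinearMap.coe_comp', Function.comp_apply,
        ContinuousLinearMap.inl_apply]
      rw [gradx_const x' y v]
      ring
    simp only at hconst
    have h0 : H (0, y) - H (0, 0) = H (x, y) - H (x, 0) := hconst.symm
    have : (0 : (Fin n → ℝ) × (Fin n → ℝ)) = ((0 : Fin n → ℝ), (0 : Fin n → ℝ)) := rfl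
    rw [this]
    linarith [h0]
  refine ⟨fun x => H (x, 0) - H 0, fun y => H (0, y), ?_, ?_, split⟩
  · exact (hinl 0).sub contDiff_const
  · exact hinr 0
end

section
/- For q ≠ 0, 1 and a C² function H on ℝ²ⁿ, the Lie derivative of the standard symplectic form ω along the deformed Hamiltonian vector field X^q_H equals (q⁻¹ − 1) Σ_{i,j} (∂²H/∂yᵢ∂xⱼ) dyᵢ ∧ dxⱼ. In matrix form: (DX^q_H)ᵀΩ + Ω DX^q_H = (q⁻¹ − 1) S, where S is the 2n×2n matrix with blocks [[0, −Bᵀ],[B, 0]] and B_{ij} = ∂²H/∂yᵢ∂xⱼ. -/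
lemma aux_sum_antisymm {n : ℕ} (S : Fin n → Fin n → ℝ) (h : ∀ i k, S i k = -S k i) :
    ∑ i, ∑ k, S i k = 0 := by
  have h2 : ∑ i, ∑ k, S i k = -∑ i, ∑ k, S i k := by
    calc ∑ i, ∑ k, S i k = ∑ k, ∑ i, S i k := Finset.sum_comm
      _ = ∑ k, ∑ i, -(S k i) :=
        Finset.sum_congr rfl fun k _ => Finset.sum_congr rfl fun i _ => h i k
      _ = -∑ i, ∑ k, S i k := by simp
  linarith

lemma aux_expand {n : ℕ} (g : ((Fin n → ℝ) × (Fin n → ℝ)) →L[ℝ] ℝ)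
    (Y : (Fin n → ℝ) × (Fin n → ℝ)) :
    g Y = ∑ k, Y.1 k * g (Pi.single k 1, 0) + ∑ k, Y.2 k * g (0, Pi.single k 1) := by
  have hY : Y = (∑ k, Y.1 k • ((Pi.single k 1 : Fin n → ℝ), (0 : Fin n → ℝ)))
      + ∑ k, Y.2 k • ((0 : Fin n → ℝ), (Pi.single k 1 : Fin n → ℝ)) := by
    apply Prod.ext <;>
    · simp only [Prod.fst_add, Prod.snd_add, Prod.fst_sum, Prod.snd_sum, Prod.smul_mk,
        smul_zero, Finset.sum_const_zero, add_zero, zero_add]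
      funext j
      simp [Finset.sum_apply, Pi.single_apply, mul_ite, Finset.sum_ite_eq']
  conv_lhs => rw [hY]
  simp only [map_add, map_sum, map_smul, smul_eq_mul]

lemma aux_alg {n : ℕ} (c : ℝ) (A B B' C : Fin n → Fin n → ℝ) (a₁ b₁ a₂ b₂ : Fin n → ℝ)
    (hA : ∀ i k, A i k = A k i) (hC : ∀ i k, C i k = C k i)
    (hB : ∀ i k, B' k i = B i k) :
    (∑ i, (-(∑ k, a₁ k * A k i + ∑ k, b₁ k * B k i) * a₂ i
        - c * (∑ k, a₁ k * B' k i + ∑ k, b₁ k * C k i) * b₂ i))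
    + ∑ i, (b₁ i * (c * (∑ k, a₂ k * B' k i + ∑ k, b₂ k * C k i))
        - a₁ i * -(∑ k, a₂ k * A k i + ∑ k, b₂ k * B k i))
    = (c - 1) * ∑ i, ∑ k, B i k * (b₁ i * a₂ k - a₁ k * b₂ i) := by
  rw [← sub_eq_zero, Finset.mul_sum, ← Finset.sum_add_distrib, ← Finset.sum_sub_distrib]
  have step : ∀ i : Fin n,
      (-(∑ k, a₁ k * A k i + ∑ k, b₁ k * B k i) * a₂ i
        - c * (∑ k, a₁ k * B' k i + ∑ k, b₁ k * C k i) * b₂ i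
      + (b₁ i * (c * (∑ k, a₂ k * B' k i + ∑ k, b₂ k * C k i))
        - a₁ i * -(∑ k, a₂ k * A k i + ∑ k, b₂ k * B k i))
      - (c - 1) * ∑ k, B i k * (b₁ i * a₂ k - a₁ k * b₂ i))
      = ∑ k, (-(a₁ k * A k i + b₁ k * B k i) * a₂ i
          - c * (a₁ k * B' k i + b₁ k * C k i) * b₂ i
        + (b₁ i * (c * (a₂ k * B' k i + b₂ k * C k i))
          - a₁ i * -(a₂ k * A k i + b₂ k * B k i))
        - (c - 1) * (B i k * (b₁ i * a₂ k - a₁ k * b₂ i))) := by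
    intro i
    simp only [Finset.sum_add_distrib, Finset.sum_sub_distrib, Finset.sum_neg_distrib,
      Finset.sum_mul, Finset.mul_sum, neg_add, neg_mul, add_mul, sub_mul, mul_add, mul_sub,
      mul_neg, neg_neg]

  rw [Finset.sum_congr rfl fun i _ => step i]
  apply aux_sum_antisymm
  intro i k
  rw [hB i k, hB k i, hA i k, hC i k]
  ring

theorem stmt13 {n : ℕ} (q : ℝ) (hq0 : q ≠ 0) (hq1 : q ≠ 1)
    (H : (Fin n → ℝ) × (Fin n → ℝ) → ℝ) (hH : ContDiff ℝ 2 H) :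
    ∀ p Y₁ Y₂ : (Fin n → ℝ) × (Fin n → ℝ),
      sympl (fderiv ℝ (Xq q H) p Y₁) Y₂ + sympl Y₁ (fderiv ℝ (Xq q H) p Y₂) =
        (q⁻¹ - 1) * ∑ i, ∑ j,
          pdyx H p i j * (Y₁.2 i * Y₂.1 j - Y₁.1 j * Y₂.2 i) := by

  intro p Y₁ Y₂
  have hd1 : Differentiable ℝ H := hH.differentiable (by norm_num)
  have hC1 : ContDiff ℝ 1 (fderiv ℝ H) := hH.fderiv_right (by norm_num)
  set f'' := fderiv ℝ (fderiv ℝ H) p with hf''def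
  have hf'' : HasFDerivAt (fderiv ℝ H) f'' p :=
    ((hC1.differentiable one_ne_zero) p).hasFDerivAt
  have hsymm : ∀ v w, f'' v w = f'' w v :=
    second_derivative_symmetric (fun y => (hd1 y).hasFDerivAt) hf''
  have key : ∀ v : (Fin n → ℝ) × (Fin n → ℝ),
      HasFDerivAt (fun p' => fderiv ℝ H p' v)
        ((ContinuousLinearMap.apply ℝ ℝ v).comp f'') p :=
    fun v => (ContinuousLinearMap.apply ℝ ℝ v).hasFDerivAt.comp p hf''
  have hpdyx : ∀ i j, pdyx H p i j = f'' (0, Pi.single i 1) (Pi.single j 1, 0) := by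
    intro i j
    simp only [pdyx, pdx]
    rw [(key (Pi.single j 1, 0)).fderiv]
    rfl
  set L : ((Fin n → ℝ) × (Fin n → ℝ)) →L[ℝ] ((Fin n → ℝ) × (Fin n → ℝ)) :=
    (ContinuousLinearMap.pi fun i =>
        q⁻¹ • ((ContinuousLinearMap.apply ℝ ℝ ((0, Pi.single i 1) :
          (Fin n → ℝ) × (Fin n → ℝ))).comp f'')).prod
    (ContinuousLinearMap.pi fun i =>
        -((ContinuousLinearMap.apply ℝ ℝ ((Pi.single i 1, 0) :
          (Fin n → ℝ) × (Fin n → ℝ))).comp f'')) with hLdef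
  have hXq : HasFDerivAt (Xq q H) L p := by
    apply HasFDerivAt.prodMk
    · exact hasFDerivAt_pi.mpr fun i => (key (0, Pi.single i 1)).const_mul q⁻¹
    · exact hasFDerivAt_pi.mpr fun i => (key (Pi.single i 1, 0)).neg
  have hL : ∀ Y : (Fin n → ℝ) × (Fin n → ℝ), fderiv ℝ (Xq q H) p Y =
      (fun i => q⁻¹ * f'' Y (0, Pi.single i 1), fun i => -(f'' Y (Pi.single i 1, 0))) := by
    intro Y
    rw [hXq.fderiv]
    rfl
  have hexp : ∀ (Y v : (Fin n → ℝ) × (Fin n → ℝ)), f'' Y v =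
      ∑ k, Y.1 k * f'' (Pi.single k 1, 0) v + ∑ k, Y.2 k * f'' (0, Pi.single k 1) v :=
    fun Y v => aux_expand (f''.flip v) Y
  have hexp1 : ∀ v, f'' Y₁ v = ∑ k, Y₁.1 k * f'' (Pi.single k 1, 0) v
      + ∑ k, Y₁.2 k * f'' (0, Pi.single k 1) v := fun v => hexp Y₁ v
  have hexp2 : ∀ v, f'' Y₂ v = ∑ k, Y₂.1 k * f'' (Pi.single k 1, 0) v
      + ∑ k, Y₂.2 k * f'' (0, Pi.single k 1) v := fun v => hexp Y₂ v
  rw [hL Y₁, hL Y₂]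
  simp only [sympl, hpdyx, hexp1, hexp2]
  exact aux_alg q⁻¹
    (fun k i => f'' (Pi.single k 1, 0) (Pi.single i 1, 0))
    (fun i k => f'' (0, Pi.single i 1) (Pi.single k 1, 0))
    (fun k i => f'' (Pi.single k 1, 0) (0, Pi.single i 1))
    (fun k i => f'' (0, Pi.single k 1) (0, Pi.single i 1))
    Y₁.1 Y₁.2 Y₂.1 Y₂.2
    (fun i k => hsymm _ _) (fun i k => hsymm _ _) (fun i k => hsymm _ _)
end

section
/- For q ≠ 0, 1, if H : ℝⁿ × ℝⁿ → ℝ is C² and X^q_H is conformally symplectic with constant c ≠ 0 — meaning (DX^q_H)ᵀΩ + Ω DX^q_H = cΩ at every point — then the Hessian block ∂²H/∂yᵢ∂xⱼ equals (c/(q⁻¹−1)) δᵢⱼ (a constant multiple of the identity) at every point. Conversely, if ∂²H/∂yᵢ∂xⱼ = λδᵢⱼ identically for a nonzero constant λ, then X^q_H is conformally symplectic with constant c = (q⁻¹−1)λ. -/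
section Aux

variable {n : ℕ}

local notation "EE" => (Fin n → ℝ) × (Fin n → ℝ)

lemma hasFDerivAt_eval (H : EE → ℝ) (hH : ContDiff ℝ 2 H) (v : EE) (p : EE) :
    HasFDerivAt (fun p' => fderiv ℝ H p' v)
      ((fderiv ℝ (fderiv ℝ H) p).flip v) p := by
  have h1 : HasFDerivAt (fderiv ℝ H) (fderiv ℝ (fderiv ℝ H) p) p :=
    (((hH.fderiv_right (m := 1) (by norm_num)).differentiable (by norm_num)) p).hasFDerivAt
  have h2 := (ContinuousLinearMap.apply ℝ ℝ v).hasFDerivAt.comp p h1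
  exact h2

lemma B_symm (H : EE → ℝ) (hH : ContDiff ℝ 2 H) (p : EE) (v w : EE) :
    fderiv ℝ (fderiv ℝ H) p v w = fderiv ℝ (fderiv ℝ H) p w v := by
  refine second_derivative_symmetric (f := H) (f' := fderiv ℝ H) (x := p) (fun y => ?_) ?_ v w
  · exact ((hH.differentiable (by norm_num)) y).hasFDerivAt
  · exact (((hH.fderiv_right (m := 1) (by norm_num)).differentiable (by norm_num)) p).hasFDerivAt

lemma pdyx_eq (H : EE → ℝ) (hH : ContDiff ℝ 2 H) (p : EE) (i j : Fin n) :
    pdyx H p i j = fderiv ℝ (fderiv ℝ H) p (0, Pi.single i 1) (Pi.single j 1, 0) := by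
  unfold pdyx pdx
  rw [(hasFDerivAt_eval H hH (Pi.single j 1, 0) p).fderiv]
  rfl

lemma fderiv_Xq_s14 (q : ℝ) (H : EE → ℝ) (hH : ContDiff ℝ 2 H) (z Y : EE) :
    fderiv ℝ (Xq q H) z Y =
      (fun i => q⁻¹ * fderiv ℝ (fderiv ℝ H) z Y (0, Pi.single i 1),
       fun i => -(fderiv ℝ (fderiv ℝ H) z Y (Pi.single i 1, 0))) := by
  set B := fderiv ℝ (fderiv ℝ H) z with hB
  have h1 : HasFDerivAt (fun p => fun i => q⁻¹ * pdy H p i)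
      (ContinuousLinearMap.pi fun i : Fin n => q⁻¹ • (B.flip (0, Pi.single i 1))) z := by
    apply hasFDerivAt_pi''
    intro i
    have := (hasFDerivAt_eval H hH (0, Pi.single i 1) z).const_mul q⁻¹
    exact this
  have h2 : HasFDerivAt (fun p => fun i => -(pdx H p i))
      (ContinuousLinearMap.pi fun i : Fin n => -(B.flip (Pi.single i 1, 0))) z := by
    apply hasFDerivAt_pi''
    intro i
    have := (hasFDerivAt_eval H hH (Pi.single i 1, 0) z).neg
    exact this
  have h3 : HasFDerivAt (Xq q H)
      ((ContinuousLinearMap.pi fun i : Fin n => q⁻¹ • (B.flip (0, Pi.single i 1))).prod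
       (ContinuousLinearMap.pi fun i : Fin n => -(B.flip (Pi.single i 1, 0)))) z :=
    h1.prodMk h2
  rw [h3.fderiv]
  rfl

lemma clm_expand (T : EE →L[ℝ] ℝ) (Y : EE) :
    T Y = ∑ j, Y.1 j * T (Pi.single j 1, 0) + ∑ j, Y.2 j * T (0, Pi.single j 1) := by
  have hY : Y = (∑ j, Y.1 j • (((Pi.single j 1 : Fin n → ℝ), (0 : Fin n → ℝ)) : EE)) +
      ∑ j, Y.2 j • (((0 : Fin n → ℝ), (Pi.single j 1 : Fin n → ℝ)) : EE) := by
    apply Prod.ext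
    · simp only [Prod.fst_add, Prod.fst_sum, Prod.smul_fst, Prod.smul_snd]
      funext k
      simp [Finset.sum_apply, Pi.single_apply]
    · simp only [Prod.snd_add, Prod.snd_sum, Prod.smul_fst, Prod.smul_snd]
      funext k
      simp [Finset.sum_apply, Pi.single_apply]
  conv_lhs => rw [hY]
  simp only [map_add, map_sum, map_smul, smul_eq_mul]

end Aux

lemma step_alg {n : ℕ} (q l : ℝ) (a b u v : Fin n → ℝ) (X N : Fin n → Fin n → ℝ)
    (hX : ∀ x y, X x y = X y x) (hN : ∀ x y, N x y = N y x) :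
    ∑ x, (-(∑ j, a j * X j x + b x * l) * u x - q⁻¹ * (a x * l + ∑ j, b j * N j x) * v x)
      + ∑ x, (b x * (q⁻¹ * (u x * l + ∑ j, v j * N j x)) - a x * -(∑ j, u j * X j x + v x * l))
      = (q⁻¹ - 1) * l * ∑ i, (b i * u i - a i * v i) := by
  have h1 : ∑ x, (∑ j, a j * X j x) * u x = ∑ x, a x * ∑ j, u j * X j x := by
    simp only [Finset.sum_mul, Finset.mul_sum]
    rw [Finset.sum_comm]
    exact Finset.sum_congr rfl fun x _ => Finset.sum_congr rfl fun j _ => by rw [hX x j]; ring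
  have h2 : ∑ x, (∑ j, b j * N j x) * v x = ∑ x, b x * ∑ j, v j * N j x := by
    simp only [Finset.sum_mul, Finset.mul_sum]
    rw [Finset.sum_comm]
    exact Finset.sum_congr rfl fun x _ => Finset.sum_congr rfl fun j _ => by rw [hN x j]; ring
  calc ∑ x, (-(∑ j, a j * X j x + b x * l) * u x
        - q⁻¹ * (a x * l + ∑ j, b j * N j x) * v x)
      + ∑ x, (b x * (q⁻¹ * (u x * l + ∑ j, v j * N j x)) - a x * -(∑ j, u j * X j x + v x * l))
      = ∑ x, ((-(∑ j, a j * X j x + b x * l) * u x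
          - q⁻¹ * (a x * l + ∑ j, b j * N j x) * v x)
        + (b x * (q⁻¹ * (u x * l + ∑ j, v j * N j x)) - a x * -(∑ j, u j * X j x + v x * l))) := by
        rw [← Finset.sum_add_distrib]
    _ = ∑ x, (a x * ∑ j, u j * X j x - (∑ j, a j * X j x) * u x
          + q⁻¹ * (b x * ∑ j, v j * N j x) - q⁻¹ * ((∑ j, b j * N j x) * v x)
          + (q⁻¹ - 1) * l * (b x * u x) - (q⁻¹ - 1) * l * (a x * v x)) :=
        Finset.sum_congr rfl fun x _ => by ring
    _ = (∑ x, a x * ∑ j, u j * X j x) - (∑ x, (∑ j, a j * X j x) * u x)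
          + q⁻¹ * ∑ x, b x * ∑ j, v j * N j x - q⁻¹ * ∑ x, (∑ j, b j * N j x) * v x
          + (q⁻¹ - 1) * l * ∑ x, b x * u x - (q⁻¹ - 1) * l * ∑ x, a x * v x := by
        simp only [Finset.sum_add_distrib, Finset.sum_sub_distrib, ← Finset.mul_sum]
    _ = (q⁻¹ - 1) * l * ∑ i, (b i * u i - a i * v i) := by
        rw [h1, h2, Finset.sum_sub_distrib]
        ring

theorem stmt14 {n : ℕ} (q : ℝ) (hq0 : q ≠ 0) (hq1 : q ≠ 1)
    (H : (Fin n → ℝ) × (Fin n → ℝ) → ℝ) (hH : ContDiff ℝ 2 H) :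
    (∀ c : ℝ, c ≠ 0 →
      (∀ z Y₁ Y₂ : (Fin n → ℝ) × (Fin n → ℝ),
        sympl (fderiv ℝ (Xq q H) z Y₁) Y₂ + sympl Y₁ (fderiv ℝ (Xq q H) z Y₂) =
          c * sympl Y₁ Y₂) →
      ∀ p : (Fin n → ℝ) × (Fin n → ℝ), ∀ i j,
        pdyx H p i j = if i = j then c / (q⁻¹ - 1) else 0) ∧
    (∀ l : ℝ, l ≠ 0 →
      (∀ p : (Fin n → ℝ) × (Fin n → ℝ), ∀ i j,
        pdyx H p i j = if i = j then l else 0) →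
      ∀ z Y₁ Y₂ : (Fin n → ℝ) × (Fin n → ℝ),
        sympl (fderiv ℝ (Xq q H) z Y₁) Y₂ + sympl Y₁ (fderiv ℝ (Xq q H) z Y₂) =
          ((q⁻¹ - 1) * l) * sympl Y₁ Y₂) := by
  have hq' : q⁻¹ - 1 ≠ 0 := by
    intro h
    apply hq1
    have : q⁻¹ = 1 := by linarith
    field_simp at this
    exact this.symm
  constructor
  · intro c hc hcond p i j
    have key := hcond p (Pi.single j 1, 0) (0, Pi.single i 1)
    rw [fderiv_Xq_s14 q H hH, fderiv_Xq_s14 q H hH] at key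
    unfold sympl at key
    simp only [Pi.single_apply, mul_ite, ite_mul, mul_zero, zero_mul, mul_one, one_mul,
      Finset.sum_ite_eq', Finset.mem_univ, if_true, sub_zero, zero_sub, mul_neg, neg_neg,
      Finset.sum_sub_distrib, Finset.sum_ite_eq, Finset.sum_const_zero] at key
    simp [Pi.single_apply] at key
    rw [pdyx_eq H hH]
    rw [B_symm H hH p (Pi.single j 1, 0) (0, Pi.single i 1)] at key
    set T := fderiv ℝ (fderiv ℝ H) p (0, Pi.single i 1) (Pi.single j 1, 0) with hT
    by_cases hij : i = j
    · simp only [hij, if_true] at key ⊢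
      rw [eq_div_iff hq']
      linarith
    · simp only [hij, if_false] at key ⊢
      have h0 : T * (q⁻¹ - 1) = 0 := by linarith
      rcases mul_eq_zero.1 h0 with h | h
      · exact h
      · exact absurd h hq'
  · intro l hl hcond z Y₁ Y₂
    set B := fderiv ℝ (fderiv ℝ H) z with hB
    have hyx : ∀ i j : Fin n, B (0, Pi.single i 1) (Pi.single j 1, 0) = if i = j then l else 0 := by
      intro i j
      rw [hB, ← pdyx_eq H hH]
      exact hcond z i j
    have hxy : ∀ i j : Fin n, B (Pi.single j 1, 0) (0, Pi.single i 1) = if i = j then l else 0 := by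
      intro i j
      rw [hB, B_symm H hH]
      exact hyx i j
    have expand : ∀ (Y w : (Fin n → ℝ) × (Fin n → ℝ)),
        B Y w = ∑ j, Y.1 j * B (Pi.single j 1, 0) w + ∑ j, Y.2 j * B (0, Pi.single j 1) w := by
      intro Y w
      simpa using clm_expand (B.flip w) Y
    rw [fderiv_Xq_s14 q H hH, fderiv_Xq_s14 q H hH, ← hB]
    unfold sympl
    simp only [expand Y₁, expand Y₂]
    simp only [hyx, hxy]
    simp only [mul_ite, ite_mul, mul_zero, zero_mul, Finset.sum_ite_eq, Finset.sum_ite_eq',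
      Finset.mem_univ, if_true]
    have hXsym : ∀ x y : Fin n, B (Pi.single x 1, 0) (Pi.single y 1, 0)
        = B (Pi.single y 1, 0) (Pi.single x 1, 0) := by
      intro x y
      rw [hB]
      exact B_symm H hH z _ _
    have hNsym : ∀ x y : Fin n, B (0, Pi.single x 1) (0, Pi.single y 1)
        = B (0, Pi.single y 1) (0, Pi.single x 1) := by
      intro x y
      rw [hB]
      exact B_symm H hH z _ _
    exact step_alg q l Y₁.1 Y₁.2 Y₂.1 Y₂.2
      (fun x y => B (Pi.single x 1, 0) (Pi.single y 1, 0))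
      (fun x y => B (0, Pi.single x 1) (0, Pi.single y 1)) hXsym hNsym
end
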